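/- Let X₁, X₂, … be independent identically distributed random variables, each taking the value 1000 with probability 1/2 and the value 0 with probability 1/2, and let Bₙ = X₁ + ⋯ + Xₙ. Then there exists N such that for every n ≥ N, E[ln(1 + Bₙ)] > ln(1 + 400·n). That is, with the logarithmic utility-for-cash u(x) = ln(1 + x), for all sufficiently large n the decision maker prefers choosing Reward B in every one of the n simultaneous bets (total random reward Bₙ) to choosing Reward A in every bet (sure total reward 400n), even though for a single bet u(400) > (1/2)·u(1000) + (1/2)·u(0), i.e., the decision maker prefers Reward A in the one-stage problem. -/

import Mathlib

open MeasureTheory ProbabilityTheory Filter Finset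

/-- With `X₁, X₂, …` i.i.d., each `1000` with probability `1/2` and
`0` with probability `1/2`, and `Bₙ = X₁ + ⋯ + Xₙ`, there exists `N` such that
for all `n ≥ N`, `E[ln(1 + Bₙ)] > ln(1 + 400·n)`: with logarithmic
utility-for-cash the decision maker eventually prefers always choosing the
lottery B in the `n` simultaneous bets over the sure reward `400·n`,
even though in the single-stage problem `u(400) > ½·u(1000) + ½·u(0)`. -/
theorem log_utility_eventually_prefers_B
    {Ω : Type*} [MeasurableSpace Ω] (μ : Measure Ω) [IsProbabilityMeasure μ]
    (X : ℕ → Ω → ℝ) (hmeas : ∀ i, Measurable (X i))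
    (hindep : iIndepFun X μ)
    (hident : ∀ i, IdentDistrib (X i) (X 0) μ μ)
    (h1000 : ∀ i, μ {ω | X i ω = 1000} = 1 / 2)
    (h0 : ∀ i, μ {ω | X i ω = 0} = 1 / 2) :
    (Real.log (1 + 400) >
        (1 / 2) * Real.log (1 + 1000) + (1 / 2) * Real.log (1 + 0)) ∧
    ∃ N : ℕ, ∀ n ≥ N,
      (∫ ω, Real.log (1 + ∑ i ∈ range n, X i ω) ∂μ) >
        Real.log (1 + 400 * n) := by
  constructor
  · -- single-stage comparison
    have h2 : Real.log (1001 : ℝ) < 2 * Real.log (401 : ℝ) := by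
      have := Real.log_lt_log (by norm_num : (0:ℝ) < 1001)
        (show (1001 : ℝ) < (401 : ℝ) ^ (2:ℕ) by norm_num)
      rwa [Real.log_pow, Nat.cast_ofNat] at this
    norm_num
    linarith
  -- setup
  have hmeas1000 : ∀ i, MeasurableSet {ω | X i ω = 1000} :=
    fun i => (hmeas i) (measurableSet_singleton (1000:ℝ))
  have hmeas0 : ∀ i, MeasurableSet {ω | X i ω = 0} :=
    fun i => (hmeas i) (measurableSet_singleton (0:ℝ))
  -- a.e. every X i takes values in {0, 1000}
  have hvals : ∀ᵐ ω ∂μ, ∀ i, X i ω = 0 ∨ X i ω = 1000 := by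
    rw [ae_all_iff]
    intro i
    have hdisj : Disjoint {ω | X i ω = 0} {ω | X i ω = 1000} := by
      rw [Set.disjoint_left]
      rintro ω (hz : X i ω = 0) (ho : X i ω = 1000)
      rw [hz] at ho; norm_num at ho
    have hunion : μ ({ω | X i ω = 0} ∪ {ω | X i ω = 1000}) = 1 := by
      rw [measure_union hdisj (hmeas1000 i), h0 i, h1000 i]
      rw [ENNReal.div_add_div_same, one_add_one_eq_two]
      exact ENNReal.div_self (by norm_num : (2:ENNReal) ≠ 0) (by norm_num : (2:ENNReal) ≠ ⊤)
    have hcompl : μ ({ω | X i ω = 0} ∪ {ω | X i ω = 1000})ᶜ = 0 := by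
      rw [measure_compl ((hmeas0 i).union (hmeas1000 i)) (measure_ne_top μ _),
        hunion, measure_univ, tsub_self]
    rw [ae_iff]
    apply measure_mono_null _ hcompl
    intro ω hω
    simp only [Set.mem_setOf_eq, not_or] at hω
    simp only [Set.mem_compl_iff, Set.mem_union, Set.mem_setOf_eq, not_or]
    exact hω
  -- expectation of each X i
  have hEX : ∀ i, μ[X i] = 500 := by
    intro i
    have hind : X i =ᵐ[μ]
        fun ω => Set.indicator {ω | X i ω = 1000} (fun _ => (1000:ℝ)) ω := by
      filter_upwards [hvals] with ω hω
      rcases hω i with h | h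
      · rw [h, Set.indicator_of_notMem]
        simp only [Set.mem_setOf_eq, h]; norm_num
      · rw [h, Set.indicator_of_mem]
        simp only [Set.mem_setOf_eq, h]
    rw [integral_congr_ae hind, integral_indicator_const _ (hmeas1000 i), measureReal_def, h1000 i]
    rw [smul_eq_mul, ENNReal.toReal_div]
    norm_num
  -- Memℒp 2
  have hmem : ∀ i, MemLp (X i) 2 μ := by
    intro i
    apply MemLp.of_bound (hmeas i).aestronglyMeasurable 1000
    filter_upwards [hvals] with ω hω
    rcases hω i with h | h <;> rw [h] <;> simp [abs_of_nonneg] <;> norm_num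
  -- variance of each X i
  have hvar : ∀ i, variance (X i) μ = 250000 := by
    intro i
    rw [variance_eq_integral (hmeas i).aemeasurable]
    change ∫ ω, ((X i - fun _ => μ[X i]) ^ (2:ℕ) : Ω → ℝ) ω ∂μ = _
    have hcongr : ((X i - fun _ => μ[X i]) ^ (2:ℕ)) =ᵐ[μ] fun _ => (250000:ℝ) := by
      filter_upwards [hvals] with ω hω
      rcases hω i with h | h <;>
        simp only [Pi.pow_apply, Pi.sub_apply, hEX i, h] <;> norm_num
    rw [integral_congr_ae hcongr, integral_const, probReal_univ]
    simp
  -- sums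
  have hmemS : ∀ n, MemLp (∑ i ∈ range n, X i) 2 μ :=
    fun n => memLp_finset_sum' _ (fun i _ => hmem i)
  have hES : ∀ n : ℕ, ∫ x, (∑ i ∈ range n, X i) x ∂μ = 500 * (n:ℝ) := by
    intro n
    have h1 : ∫ ω, (∑ i ∈ range n, X i) ω ∂μ = ∑ i ∈ range n, ∫ ω, X i ω ∂μ := by
      simp only [Finset.sum_apply]
      exact integral_finset_sum _ (fun i _ => (hmem i).integrable one_le_two)
    rw [h1]
    simp [hEX, mul_comm]
  have hVarS : ∀ n : ℕ, variance (∑ i ∈ range n, X i) μ = 250000 * n := by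
    intro n
    rw [IndepFun.variance_sum (fun i _ => hmem i)
      (fun i _ j _ hij => hindep.indepFun hij)]
    simp [hvar, mul_comm]
  -- Chebyshev
  have hcheb : ∀ n : ℕ, 1 ≤ n →
      μ {ω | (50*(n:ℝ)) ≤ |(∑ i ∈ range n, X i) ω - 500*(n:ℝ)|}
        ≤ ENNReal.ofReal (100 / (n:ℝ)) := by
    intro n hn
    have hn' : (1:ℝ) ≤ (n:ℝ) := by exact_mod_cast hn
    have hc : (0:ℝ) < 50 * n := by nlinarith
    have h := meas_ge_le_variance_div_sq (μ := μ) (hmemS n) hc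
    rw [hVarS n, hES n] at h
    have heq : (250000 * (n:ℝ)) / (50 * n) ^ 2 = 100 / n := by
      field_simp
      ring
    rwa [heq] at h
  -- key lower bound on the expected log-utility
  have key : ∀ n : ℕ, 1 ≤ n →
      (1 - 100/(n:ℝ)) * Real.log (1 + 450*n)
        ≤ ∫ ω, Real.log (1 + ∑ i ∈ range n, X i ω) ∂μ := by
    intro n hn
    have hn' : (1:ℝ) ≤ (n:ℝ) := by exact_mod_cast hn
    set A := {ω | (50*(n:ℝ)) ≤ |(∑ i ∈ range n, X i) ω - 500*(n:ℝ)|}ᶜ with hA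
    have hsum_eq : (∑ i ∈ range n, X i) = fun ω => ∑ i ∈ range n, X i ω :=
      funext fun ω => Finset.sum_apply _ _ _
    have hmeasS : Measurable (∑ i ∈ range n, X i) := by
      rw [hsum_eq]
      exact Finset.measurable_sum _ (fun i _ => hmeas i)
    have hmA : MeasurableSet A :=
      (measurableSet_le measurable_const
        ((hmeasS.sub measurable_const).abs)).compl
    have hlogpos : 0 ≤ Real.log (1 + 450*(n:ℝ)) :=
      Real.log_nonneg (by nlinarith)
    have hSnonneg : ∀ᵐ ω ∂μ,
        0 ≤ ∑ i ∈ range n, X i ω ∧ ∑ i ∈ range n, X i ω ≤ 1000*n := by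
      filter_upwards [hvals] with ω hω
      constructor
      · apply Finset.sum_nonneg
        intro i _
        rcases hω i with h | h <;> rw [h] <;> norm_num
      · calc ∑ i ∈ range n, X i ω ≤ ∑ _i ∈ range n, (1000:ℝ) := by
              apply Finset.sum_le_sum
              intro i _
              rcases hω i with h | h <;> rw [h] <;> norm_num
          _ = 1000 * n := by simp [mul_comm]
    have haesm : AEStronglyMeasurable (fun ω => Real.log (1 + ∑ i ∈ range n, X i ω)) μ := by
      apply Measurable.aestronglyMeasurable
      apply Real.measurable_log.comp
      apply Measurable.add measurable_const
      rw [← hsum_eq]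
      exact hmeasS
    have hint : Integrable (fun ω => Real.log (1 + ∑ i ∈ range n, X i ω)) μ := by
      apply (MemLp.of_bound haesm (Real.log (1 + 1000*n)) ?_).integrable le_rfl
      filter_upwards [hSnonneg] with ω hω
      rw [Real.norm_eq_abs, abs_of_nonneg (Real.log_nonneg (by linarith [hω.1]))]
      exact Real.log_le_log (by linarith [hω.1]) (by linarith [hω.2])
    have hintInd : Integrable
        (fun ω => A.indicator (fun _ => Real.log (1 + 450*(n:ℝ))) ω) μ :=
      (integrable_const _).indicator hmA
    have hind2 : (fun ω => A.indicator (fun _ => Real.log (1 + 450*(n:ℝ))) ω)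
        ≤ᵐ[μ] fun ω => Real.log (1 + ∑ i ∈ range n, X i ω) := by
      filter_upwards [hSnonneg] with ω hω
      by_cases hωA : ω ∈ A
      · rw [Set.indicator_of_mem hωA]
        have hmem' : ¬ (50*(n:ℝ)) ≤ |(∑ i ∈ range n, X i) ω - 500*(n:ℝ)| := hωA
        rw [not_le] at hmem'
        have habs := abs_lt.mp hmem'
        have hge : (450:ℝ)*n ≤ ∑ i ∈ range n, X i ω := by
          have : (∑ i ∈ range n, X i) ω = ∑ i ∈ range n, X i ω :=
            Finset.sum_apply _ _ _
          rw [this] at habs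
          linarith [habs.1]
        exact Real.log_le_log (by nlinarith) (by linarith)
      · rw [Set.indicator_of_notMem hωA]
        exact Real.log_nonneg (by linarith [hω.1])
    have hIub := integral_mono_ae hintInd hint hind2
    rw [integral_indicator_const _ hmA, smul_eq_mul] at hIub
    have hμA : 1 - 100/(n:ℝ) ≤ (μ A).toReal := by
      have h1 : μ Aᶜ ≤ ENNReal.ofReal (100/(n:ℝ)) := by
        rw [hA, compl_compl]; exact hcheb n hn
      have h2 : (μ Aᶜ).toReal ≤ 100/(n:ℝ) := by
        refine le_trans (ENNReal.toReal_mono (by simp) h1) ?_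
        rw [ENNReal.toReal_ofReal (by positivity)]
      have h3 : (μ A).toReal = 1 - (μ Aᶜ).toReal := by
        have := prob_compl_eq_one_sub (μ := μ) hmA.compl
        rw [compl_compl] at this
        rw [this, ENNReal.toReal_sub_of_le (prob_le_one) (by simp)]
        simp
      rw [h3]; linarith
    calc (1 - 100/(n:ℝ)) * Real.log (1 + 450*n)
        ≤ (μ A).toReal * Real.log (1 + 450*n) :=
          mul_le_mul_of_nonneg_right hμA hlogpos
      _ ≤ _ := hIub
  -- asymptotics: (100/n) * log(1+450 n) → 0
  have hlit : (fun n : ℕ => Real.log (1 + 450*(n:ℝ)))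
      =o[atTop] (fun n : ℕ => (n:ℝ)) := by
    have h1 : Tendsto (fun n : ℕ => 1 + 450*(n:ℝ)) atTop atTop := by
      apply tendsto_atTop_add_const_left
      exact (tendsto_natCast_atTop_atTop).const_mul_atTop (by norm_num)
    have h2 := Real.isLittleO_log_id_atTop.comp_tendsto h1
    refine h2.trans_isBigO ?_
    rw [Asymptotics.isBigO_iff]
    refine ⟨451, ?_⟩
    filter_upwards [eventually_ge_atTop 1] with n hn
    have hn' : (1:ℝ) ≤ (n:ℝ) := by exact_mod_cast hn
    simp only [Function.comp_apply, id_eq, Real.norm_eq_abs]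
    rw [abs_of_nonneg (by linarith), abs_of_nonneg (by linarith)]
    nlinarith
  have htend : Tendsto (fun n : ℕ => (100/(n:ℝ)) * Real.log (1 + 450*(n:ℝ)))
      atTop (nhds 0) := by
    have h := (hlit.tendsto_div_nhds_zero).const_mul (100:ℝ)
    rw [mul_zero] at h
    refine h.congr (fun n => ?_)
    ring
  -- conclude
  have hev : ∀ᶠ n : ℕ in atTop,
      (100/(n:ℝ)) * Real.log (1 + 450*(n:ℝ)) < 1/11 ∧ 1 ≤ n :=
    (htend.eventually_lt_const (by norm_num : (0:ℝ) < 1/11)).and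
      (eventually_ge_atTop 1)
  obtain ⟨N, hN⟩ := eventually_atTop.mp hev
  refine ⟨N, fun n hn => ?_⟩
  obtain ⟨hsmall, hn1⟩ := hN n hn
  have hn' : (1:ℝ) ≤ (n:ℝ) := by exact_mod_cast hn1
  have hkey := key n hn1
  have hgap : Real.log (1 + 450*(n:ℝ)) - Real.log (1 + 400*(n:ℝ)) ≥ 1/11 := by
    have hq : (11:ℝ)/10 ≤ (1 + 450*(n:ℝ)) / (1 + 400*(n:ℝ)) := by
      rw [le_div_iff₀ (by nlinarith)]
      nlinarith
    have h1 : Real.log ((11:ℝ)/10) ≤ Real.log ((1 + 450*(n:ℝ)) / (1 + 400*(n:ℝ))) :=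
      Real.log_le_log (by norm_num) hq
    have h2 : Real.log ((1 + 450*(n:ℝ)) / (1 + 400*(n:ℝ)))
        = Real.log (1 + 450*(n:ℝ)) - Real.log (1 + 400*(n:ℝ)) :=
      Real.log_div (by nlinarith) (by nlinarith)
    have h3 : (1:ℝ)/11 ≤ Real.log ((11:ℝ)/10) := by
      have := Real.log_le_sub_one_of_pos (show (0:ℝ) < 10/11 by norm_num)
      have h4 : Real.log ((10:ℝ)/11) = - Real.log ((11:ℝ)/10) := by
        rw [← Real.log_inv]; norm_num
      rw [h4] at this
      linarith
    linarith [h1, h2 ▸ h1]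
  calc Real.log (1 + 400 * (n:ℝ))
      < (1 - 100/(n:ℝ)) * Real.log (1 + 450*(n:ℝ)) := by nlinarith [hgap, hsmall]
    _ ≤ _ := hkey
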